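/- Let S = k[x,y,z,t,u,v,w] be a polynomial ring over a field k, let F = x^2 + u*y^2 + 2*v*y*z + w*z^2 + (u*w - v^2)*t^2, and let Ξ be the 4×4 matrix over S with rows (-vt, y, z, t), (-uy-2vz, vt, -ut, z), (-wz, wt, -vt, -y), (-uwt, -wz, uy+2vz, vt). Set Φ = x·I₄ - Ξ and Ψ = x·I₄ + Ξ. Then Φ·Ψ = Ψ·Φ = F·I₄. -/
import Mathlib


open MvPolynomial Matrix

noncomputable section

variable {k : Type*} [Field k]

/-- The variables x,y,z,t,u,v,w of the polynomial ring S = k[x,y,z,t,u,v,w]. -/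
abbrev S (k : Type*) [Field k] := MvPolynomial (Fin 7) k

def x : S k := X 0
def y : S k := X 1
def z : S k := X 2
def t : S k := X 3
def u : S k := X 4
def v : S k := X 5
def w : S k := X 6

/-- The Curto–Morrison polynomial F. -/
def F : S k := x^2 + u*y^2 + 2*v*y*z + w*z^2 + (u*w - v^2)*t^2

/-- The matrix Ξ of the matrix factorization. -/
def Xi : Matrix (Fin 4) (Fin 4) (S k) :=
  !![-(v*t), y, z, t;
     -(u*y) - 2*v*z, v*t, -(u*t), z;
     -(w*z), w*t, -(v*t), -y;
     -(u*w*t), -(w*z), u*y + 2*v*z, v*t]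

def Phi : Matrix (Fin 4) (Fin 4) (S k) := (x : S k) • (1 : Matrix (Fin 4) (Fin 4) (S k)) - Xi
def Psi : Matrix (Fin 4) (Fin 4) (S k) := (x : S k) • (1 : Matrix (Fin 4) (Fin 4) (S k)) + Xi

set_option maxHeartbeats 2000000 in
theorem matrix_factorization :
    (Phi : Matrix (Fin 4) (Fin 4) (S k)) * Psi = (F : S k) • (1 : Matrix (Fin 4) (Fin 4) (S k)) ∧
    (Psi : Matrix (Fin 4) (Fin 4) (S k)) * Phi = (F : S k) • (1 : Matrix (Fin 4) (Fin 4) (S k)) := by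
  have key : (Xi : Matrix (Fin 4) (Fin 4) (S k)) * Xi
      = ((x : S k)^2 - F) • (1 : Matrix (Fin 4) (Fin 4) (S k)) := by
    ext i j : 1
    fin_cases i <;> fin_cases j <;>
      simp [Xi, F, Matrix.mul_apply, Fin.sum_univ_four, Matrix.one_apply] <;> ring
  have hx : ∀ A : Matrix (Fin 4) (Fin 4) (S k),
      ((x : S k) • (1 : Matrix (Fin 4) (Fin 4) (S k))) * A
        = A * ((x : S k) • (1 : Matrix (Fin 4) (Fin 4) (S k))) := by
    intro A; simp [Matrix.smul_mul, Matrix.mul_smul]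
  constructor <;>
  · simp only [Phi, Psi, Matrix.add_mul, Matrix.mul_add, Matrix.sub_mul, Matrix.mul_sub,
      Matrix.smul_mul, Matrix.mul_smul, Matrix.one_mul, Matrix.mul_one, key, smul_smul]
    ext i j : 1
    simp only [Matrix.add_apply, Matrix.sub_apply, Matrix.smul_apply, Matrix.one_apply,
      smul_eq_mul]
    split <;> ring

end
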